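/- arXiv:1808.08464 — 2 statements merged into one kernel-verified Lean document; each statement's English description precedes it below -/
import Mathlib

section
/- Let L₁, L₂ ⊂ ℝ^{2n} be Lagrangian subspaces. Then there exists ε > 0 such that for all θ with 0 < |θ| ≤ ε, the subspace e^{θJ}L₂ is Lagrangian and L₁ ∩ e^{θJ}L₂ = {0}. -/
open Matrix

noncomputable def stdJ (n : ℕ) : Matrix (Fin n ⊕ Fin n) (Fin n ⊕ Fin n) ℝ :=
  Matrix.fromBlocks 0 (-1) 1 0

noncomputable def omega0 {n : ℕ} (x y : Fin n ⊕ Fin n → ℝ) : ℝ :=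
  (stdJ n).mulVec x ⬝ᵥ y

def IsLagrangian {n : ℕ} (L : Submodule ℝ (Fin n ⊕ Fin n → ℝ)) : Prop :=
  Module.finrank ℝ L = n ∧ ∀ x ∈ L, ∀ y ∈ L, omega0 x y = 0

/-- `e^{θJ} = cos(θ)·I + sin(θ)·J`. -/
noncomputable def expJ (n : ℕ) (θ : ℝ) : Matrix (Fin n ⊕ Fin n) (Fin n ⊕ Fin n) ℝ :=
  Real.cos θ • (1 : Matrix (Fin n ⊕ Fin n) (Fin n ⊕ Fin n) ℝ) + Real.sin θ • stdJ n

lemma stdJ_mul_stdJ (n : ℕ) : stdJ n * stdJ n = -1 := by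
  simp [stdJ, Matrix.fromBlocks_multiply, ← Matrix.fromBlocks_one,
    Matrix.fromBlocks_neg]

lemma stdJ_transpose (n : ℕ) : (stdJ n)ᵀ = - stdJ n := by
  simp [stdJ, Matrix.fromBlocks_transpose, Matrix.fromBlocks_neg]

lemma expJ_mulVec {n : ℕ} (θ : ℝ) (x : Fin n ⊕ Fin n → ℝ) :
    (expJ n θ).mulVec x = Real.cos θ • x + Real.sin θ • (stdJ n).mulVec x := by
  simp [expJ, Matrix.add_mulVec, Matrix.smul_mulVec]

lemma stdJ_mulVec_stdJ_mulVec {n : ℕ} (x : Fin n ⊕ Fin n → ℝ) :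
    (stdJ n).mulVec ((stdJ n).mulVec x) = -x := by
  rw [Matrix.mulVec_mulVec, stdJ_mul_stdJ]
  simp [Matrix.neg_mulVec]

lemma dot_stdJ_mulVec {n : ℕ} (x y : Fin n ⊕ Fin n → ℝ) :
    x ⬝ᵥ (stdJ n).mulVec y = - omega0 x y := by
  rw [omega0, Matrix.dotProduct_mulVec, ← Matrix.mulVec_transpose, stdJ_transpose,
    Matrix.neg_mulVec]
  simp

lemma omega0_expJ_left {n : ℕ} (θ : ℝ) (x y : Fin n ⊕ Fin n → ℝ) :
    omega0 ((expJ n θ).mulVec x) y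
      = Real.cos θ * omega0 x y - Real.sin θ * (x ⬝ᵥ y) := by
  rw [omega0, expJ_mulVec, Matrix.mulVec_add, Matrix.mulVec_smul, Matrix.mulVec_smul,
    stdJ_mulVec_stdJ_mulVec]
  simp [omega0, add_dotProduct, smul_dotProduct, neg_dotProduct,
    sub_eq_add_neg, mul_comm]

lemma omega0_expJ_right {n : ℕ} (θ : ℝ) (x y : Fin n ⊕ Fin n → ℝ) :
    omega0 x ((expJ n θ).mulVec y)
      = Real.cos θ * omega0 x y + Real.sin θ * (x ⬝ᵥ y) := by
  rw [omega0, expJ_mulVec, dotProduct_add, dotProduct_smul,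
    dotProduct_smul]
  rw [dot_stdJ_mulVec, show omega0 ((stdJ n).mulVec x) y = -(x ⬝ᵥ y) by
    rw [omega0, stdJ_mulVec_stdJ_mulVec]; simp]
  simp [omega0, smul_eq_mul]

lemma expJ_mul (n : ℕ) (θ φ : ℝ) : expJ n θ * expJ n φ = expJ n (θ + φ) := by
  simp only [expJ, add_mul, mul_add, Matrix.smul_mul, Matrix.mul_smul, one_mul, mul_one,
    stdJ_mul_stdJ, smul_smul, Real.cos_add, Real.sin_add, smul_neg]
  module

lemma expJ_zero (n : ℕ) : expJ n 0 = 1 := by simp [expJ]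

lemma omega0_expJ_expJ {n : ℕ} (θ : ℝ) (x y : Fin n ⊕ Fin n → ℝ) :
    omega0 ((expJ n θ).mulVec x) ((expJ n θ).mulVec y) = omega0 x y := by
  rw [omega0_expJ_right, omega0_expJ_left]
  rw [show (expJ n θ).mulVec x ⬝ᵥ y = Real.cos θ * (x ⬝ᵥ y) + Real.sin θ * omega0 x y by
    rw [expJ_mulVec, add_dotProduct, smul_dotProduct, smul_dotProduct]
    simp [smul_eq_mul, omega0]]
  linear_combination omega0 x y * Real.sin_sq_add_cos_sq θ

noncomputable def expJEquiv (n : ℕ) (θ : ℝ) :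
    (Fin n ⊕ Fin n → ℝ) ≃ₗ[ℝ] (Fin n ⊕ Fin n → ℝ) :=
  LinearEquiv.ofLinear (expJ n θ).mulVecLin (expJ n (-θ)).mulVecLin
    (by rw [← Matrix.mulVecLin_mul, expJ_mul]; simp [expJ_zero])
    (by rw [← Matrix.mulVecLin_mul, expJ_mul]; simp [expJ_zero])

lemma isLagrangian_map {n : ℕ} (θ : ℝ) (L : Submodule ℝ (Fin n ⊕ Fin n → ℝ))
    (h : IsLagrangian L) : IsLagrangian (L.map (expJ n θ).mulVecLin) := by
  constructor
  · have : L.map (expJ n θ).mulVecLin = L.map (expJEquiv n θ : (Fin n ⊕ Fin n → ℝ) →ₗ[ℝ] _) := rfl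
    rw [this, LinearEquiv.finrank_map_eq, h.1]
  · rintro x ⟨a, ha, rfl⟩ y ⟨b, hb, rfl⟩
    simp only [Matrix.mulVecLin_apply]
    rw [omega0_expJ_expJ]
    exact h.2 a ha b hb

lemma sin_ne_zero_of_small {θ : ℝ} (h0 : 0 < |θ|) (h1 : |θ| ≤ 1) : Real.sin θ ≠ 0 := by
  have hpi := Real.pi_gt_three
  rcases lt_trichotomy θ 0 with h | h | h
  · have : Real.sin (-θ) > 0 := by
      apply Real.sin_pos_of_pos_of_lt_pi (by linarith)
      have : |θ| = -θ := abs_of_neg h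
      linarith [this ▸ h1]
    rw [Real.sin_neg] at this; linarith
  · simp [h] at h0
  · have : Real.sin θ > 0 := by
      apply Real.sin_pos_of_pos_of_lt_pi h
      have : |θ| = θ := abs_of_pos h
      linarith [this ▸ h1]
    linarith

theorem stmt8 (n : ℕ) (L₁ L₂ : Submodule ℝ (Fin n ⊕ Fin n → ℝ))
    (h₁ : IsLagrangian L₁) (h₂ : IsLagrangian L₂) :
    ∃ ε > (0 : ℝ), ∀ θ : ℝ, 0 < |θ| → |θ| ≤ ε →
      IsLagrangian (L₂.map (expJ n θ).mulVecLin) ∧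
        L₁ ⊓ L₂.map (expJ n θ).mulVecLin = ⊥ := by
  by_contra hc
  push_neg at hc
  have key : ∀ k : ℕ, ∃ θ : ℝ, ∃ u : Fin n ⊕ Fin n → ℝ,
      0 < |θ| ∧ |θ| ≤ 1 ∧ |θ| ≤ 1 / (k + 1) ∧ u ∈ L₂ ∧ ‖u‖ = 1 ∧
        (expJ n θ).mulVec u ∈ L₁ := by
    intro k
    have hεpos : (0 : ℝ) < min 1 (1 / ((k : ℝ) + 1)) := by positivity
    obtain ⟨θ, hθ0, hθε, hbad⟩ := hc (min 1 (1 / ((k : ℝ) + 1))) hεpos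
    have hne : L₁ ⊓ L₂.map (expJ n θ).mulVecLin ≠ ⊥ := hbad (isLagrangian_map θ L₂ h₂)
    obtain ⟨v, hv, hv0⟩ := Submodule.exists_mem_ne_zero_of_ne_bot hne
    obtain ⟨hvL₁, y, hyL₂, hyv⟩ := hv
    have hy0 : y ≠ 0 := by rintro rfl; simp [Matrix.mulVecLin_apply] at hyv; exact hv0 hyv.symm
    refine ⟨θ, ‖y‖⁻¹ • y, hθ0, le_trans hθε (min_le_left _ _),
      le_trans hθε (min_le_right _ _), L₂.smul_mem _ hyL₂, ?_, ?_⟩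
    · rw [norm_smul, norm_inv, norm_norm, inv_mul_cancel₀ (norm_ne_zero_iff.mpr hy0)]
    · rw [Matrix.mulVec_smul]
      exact L₁.smul_mem _ (by rwa [show (expJ n θ).mulVec y = v from hyv])
  choose θs u hpos hle1 hlek huL₂ hunorm heL₁ using key
  -- compactness
  have hScompact : IsCompact ((L₂ : Set (Fin n ⊕ Fin n → ℝ)) ∩ Metric.sphere 0 1) :=
    (isCompact_sphere 0 1).inter_left (Submodule.closed_of_finiteDimensional L₂)
  have hmem : ∀ k, u k ∈ (L₂ : Set (Fin n ⊕ Fin n → ℝ)) ∩ Metric.sphere 0 1 := fun k =>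
    ⟨huL₂ k, by simp [mem_sphere_iff_norm, hunorm k]⟩
  obtain ⟨y, hyS, φ, hφ, hconv⟩ := hScompact.tendsto_subseq hmem
  have hyL₂ : y ∈ L₂ := hyS.1
  have hynorm : ‖y‖ = 1 := by simpa [mem_sphere_iff_norm] using hyS.2
  -- θ tends to 0
  have hθ0 : Filter.Tendsto (fun k => θs (φ k)) Filter.atTop (nhds 0) := by
    apply squeeze_zero_norm (fun k => ?_) tendsto_one_div_add_atTop_nhds_zero_nat
    calc ‖θs (φ k)‖ ≤ 1 / (φ k + 1) := hlek (φ k)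
      _ ≤ 1 / (k + 1) := by
          apply one_div_le_one_div_of_le (by positivity)
          have hk : k ≤ φ k := hφ.le_apply
          exact add_le_add_left (by exact_mod_cast hk) 1
  -- continuity of J action
  have cJ : Continuous fun v : Fin n ⊕ Fin n → ℝ => (stdJ n).mulVec v :=
    (stdJ n).mulVecLin.continuous_of_finiteDimensional
  -- e^{θJ} u tends to y
  have hconvE : Filter.Tendsto (fun k => (expJ n (θs (φ k))).mulVec (u (φ k)))
      Filter.atTop (nhds y) := by
    have h1 : Filter.Tendsto (fun k => Real.cos (θs (φ k)) • u (φ k)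
        + Real.sin (θs (φ k)) • (stdJ n).mulVec (u (φ k))) Filter.atTop
        (nhds ((1 : ℝ) • y + (0 : ℝ) • (stdJ n).mulVec y)) := by
      apply Filter.Tendsto.add
      · exact Filter.Tendsto.smul ((Real.continuous_cos.tendsto 0).comp hθ0 |>.congr
          (fun _ => rfl) |>.mono_right (by simp [Real.cos_zero])) hconv
      · exact Filter.Tendsto.smul ((Real.continuous_sin.tendsto 0).comp hθ0 |>.congr
          (fun _ => rfl) |>.mono_right (by simp [Real.sin_zero])) ((cJ.tendsto y).comp hconv)
    simp only [one_smul, zero_smul, add_zero] at h1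
    exact h1.congr (fun k => (expJ_mulVec _ _).symm)
  -- y ∈ L₁
  have hyL₁ : y ∈ L₁ := by
    have hcl : IsClosed (L₁ : Set (Fin n ⊕ Fin n → ℝ)) := Submodule.closed_of_finiteDimensional L₁
    exact hcl.mem_of_tendsto hconvE (Filter.Eventually.of_forall fun k => heL₁ (φ k))
  -- orthogonality
  have horth : ∀ k, u (φ k) ⬝ᵥ y = 0 := by
    intro k
    have h0 : omega0 ((expJ n (θs (φ k))).mulVec (u (φ k))) y = 0 :=
      h₁.2 _ (heL₁ (φ k)) y hyL₁
    rw [omega0_expJ_left, h₂.2 _ (huL₂ (φ k)) y hyL₂, mul_zero, zero_sub, neg_eq_zero] at h0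
    exact (mul_eq_zero.mp h0).resolve_left (sin_ne_zero_of_small (hpos (φ k)) (hle1 (φ k)))
  -- pass to the limit
  have cdot : Continuous fun v : Fin n ⊕ Fin n → ℝ => v ⬝ᵥ y := by
    have : (fun v : Fin n ⊕ Fin n → ℝ => v ⬝ᵥ y)
        = fun v => ∑ i, v i * y i := by funext v; rfl
    rw [this]
    exact continuous_finset_sum _ fun i _ => (continuous_apply i).mul continuous_const
  have hdot : Filter.Tendsto (fun k => u (φ k) ⬝ᵥ y) Filter.atTop (nhds (y ⬝ᵥ y)) :=
    (cdot.tendsto y).comp hconv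
  have hyy : y ⬝ᵥ y = 0 := by
    have h2 : Filter.Tendsto (fun _ : ℕ => (0 : ℝ)) Filter.atTop (nhds (y ⬝ᵥ y)) := by
      have heq : (fun k : ℕ => u (φ k) ⬝ᵥ y) = fun _ : ℕ => (0 : ℝ) := funext horth
      rw [← heq]; exact hdot
    exact tendsto_nhds_unique h2 tendsto_const_nhds
  have : y = 0 := dotProduct_self_eq_zero.mp hyy
  rw [this, norm_zero] at hynorm
  exact zero_ne_one hynorm
end

section
/- Let U, V be closed subspaces of a Hilbert space H with orthogonal projections P_U, P_V, and define δ(U,V) = sup_{u ∈ U, ‖u‖=1} dist(u,V) for U ≠ {0}. Then ‖P_U - P_V‖ = max{δ(U,V), δ(V,U)} for non-trivial closed subspaces U, V. -/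
open scoped RealInnerProductSpace

/-- `δ(U,V) = sup_{u ∈ U, ‖u‖=1} dist(u, V)`. -/
noncomputable def subspaceDelta {H : Type*} [NormedAddCommGroup H]
    [InnerProductSpace ℝ H] (U V : Submodule ℝ H) : ℝ :=
  sSup {d : ℝ | ∃ u ∈ U, ‖u‖ = 1 ∧ d = Metric.infDist u (V : Set H)}

open Submodule

section aux

variable {H : Type*} [NormedAddCommGroup H] [InnerProductSpace ℝ H]
    [CompleteSpace H] (U V : Submodule ℝ H)
    [HasOrthogonalProjection U] [HasOrthogonalProjection V]

lemma infDist_eq_proj (u : H) :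
    Metric.infDist u (V : Set H) = ‖u - orthogonalProjection V u‖ := by
  rw [Metric.infDist_eq_iInf, ← starProjection_apply, starProjection_minimal]
  exact congrArg _ (funext fun v => (dist_eq_norm _ _))

lemma delta_bddAbove :
    BddAbove {d : ℝ | ∃ u ∈ U, ‖u‖ = 1 ∧ d = Metric.infDist u (V : Set H)} := by
  refine ⟨1, fun d hd => ?_⟩
  obtain ⟨u, _, hu1, rfl⟩ := hd
  calc Metric.infDist u (V : Set H) ≤ dist u 0 :=
        Metric.infDist_le_dist_of_mem V.zero_mem
    _ = 1 := by rw [dist_zero_right, hu1]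

lemma delta_nonneg (hU : U ≠ ⊥) : 0 ≤ subspaceDelta U V := by
  obtain ⟨u, hu, hune⟩ := Submodule.exists_mem_ne_zero_of_ne_bot hU
  have hnorm : ‖u‖ ≠ 0 := norm_ne_zero_iff.mpr hune
  have hmem : Metric.infDist (‖u‖⁻¹ • u) (V : Set H) ∈
      {d : ℝ | ∃ w ∈ U, ‖w‖ = 1 ∧ d = Metric.infDist w (V : Set H)} :=
    ⟨‖u‖⁻¹ • u, U.smul_mem _ hu, by
      rw [norm_smul, norm_inv, norm_norm, inv_mul_cancel₀ hnorm], rfl⟩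
  exact le_trans Metric.infDist_nonneg (le_csSup (delta_bddAbove U V) hmem)

lemma key1 (u : H) (hu : u ∈ U) :
    ‖u - orthogonalProjection V u‖ ≤ subspaceDelta U V * ‖u‖ := by
  rcases eq_or_ne u 0 with rfl | hne
  · simp
  · have hnorm : ‖u‖ ≠ 0 := norm_ne_zero_iff.mpr hne
    set w : H := ‖u‖⁻¹ • u with hw
    have hw1 : ‖w‖ = 1 := by
      rw [hw, norm_smul, norm_inv, norm_norm, inv_mul_cancel₀ hnorm]
    have hmem : Metric.infDist w (V : Set H) ∈
        {d : ℝ | ∃ x ∈ U, ‖x‖ = 1 ∧ d = Metric.infDist x (V : Set H)} :=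
      ⟨w, U.smul_mem _ hu, hw1, rfl⟩
    have hle : Metric.infDist w (V : Set H) ≤ subspaceDelta U V :=
      le_csSup (delta_bddAbove U V) hmem
    have heq : Metric.infDist w (V : Set H) = ‖u‖⁻¹ * ‖u - orthogonalProjection V u‖ := by
      rw [infDist_eq_proj, hw, map_smul]
      rw [show (‖u‖⁻¹ • u) - ((‖u‖⁻¹ • (orthogonalProjection V u : V) : V) : H)
          = ‖u‖⁻¹ • (u - orthogonalProjection V u) by
        push_cast; rw [smul_sub]]
      rw [norm_smul, norm_inv, norm_norm]
    rw [heq] at hle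
    calc ‖u - orthogonalProjection V u‖
        = (‖u‖⁻¹ * ‖u - orthogonalProjection V u‖) * ‖u‖ := by
          field_simp
      _ ≤ subspaceDelta U V * ‖u‖ := by
          exact mul_le_mul_of_nonneg_right hle (norm_nonneg u)

lemma key2 (hVne : V ≠ ⊥) (y : H) (hy : y ∈ Uᗮ) :
    ‖(orthogonalProjection V y : H)‖ ≤ subspaceDelta V U * ‖y‖ := by
  set v : H := (orthogonalProjection V y : H) with hv
  have hvV : v ∈ V := (orthogonalProjection V y).2
  have h1 : ⟪v, y - v⟫ = 0 := by
    rw [real_inner_comm]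
    exact (Submodule.mem_orthogonal' V _).mp (sub_starProjection_mem_orthogonal y) v hvV
  have h2 : ‖v‖ ^ 2 = ⟪v, y⟫ := by
    have := real_inner_self_eq_norm_sq v
    have hsub : ⟪v, y⟫ - ⟪v, v⟫ = 0 := by
      rw [← inner_sub_right]; exact h1
    nlinarith
  have h3 : ⟪(orthogonalProjection U v : H), y⟫ = 0 := by
    have := (Submodule.mem_orthogonal U y).mp hy _ (orthogonalProjection U v).2
    simpa [real_inner_comm] using this
  have h4 : ⟪v, y⟫ = ⟪v - orthogonalProjection U v, y⟫ := by
    rw [inner_sub_left, h3, sub_zero]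
  have h5 : ⟪v - orthogonalProjection U v, y⟫ ≤ ‖v - orthogonalProjection U v‖ * ‖y‖ :=
    real_inner_le_norm _ _
  have h6 : ‖v - orthogonalProjection U v‖ ≤ subspaceDelta V U * ‖v‖ := key1 V U v hvV
  have h7 : ‖v‖ ^ 2 ≤ subspaceDelta V U * ‖v‖ * ‖y‖ := by
    calc ‖v‖ ^ 2 = ⟪v - orthogonalProjection U v, y⟫ := by rw [h2, h4]
      _ ≤ ‖v - orthogonalProjection U v‖ * ‖y‖ := h5
      _ ≤ subspaceDelta V U * ‖v‖ * ‖y‖ :=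
          mul_le_mul_of_nonneg_right h6 (norm_nonneg y)
  rcases eq_or_ne v 0 with hv0 | hv0
  · rw [hv0, norm_zero]
    exact mul_nonneg (delta_nonneg V U hVne) (norm_nonneg y)
  · have hnv : 0 < ‖v‖ := norm_pos_iff.mpr hv0
    nlinarith

end aux

theorem stmt11 {H : Type*} [NormedAddCommGroup H] [InnerProductSpace ℝ H]
    [CompleteSpace H] (U V : Submodule ℝ H)
    [U.HasOrthogonalProjection] [V.HasOrthogonalProjection]
    (hU : U ≠ ⊥) (hV : V ≠ ⊥) :
    ‖U.subtypeL.comp U.orthogonalProjectionOnto -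
        V.subtypeL.comp V.orthogonalProjectionOnto‖ =
      max (subspaceDelta U V) (subspaceDelta V U) := by
  set T := U.subtypeL.comp (orthogonalProjection U) -
      V.subtypeL.comp (orthogonalProjection V) with hT
  have hTapply : ∀ x : H, T x = (orthogonalProjection U x : H) -
      (orthogonalProjection V x : H) := fun x => rfl
  have ha : 0 ≤ subspaceDelta U V := delta_nonneg U V hU
  have hb : 0 ≤ subspaceDelta V U := delta_nonneg V U hV
  set a := subspaceDelta U V
  set b := subspaceDelta V U
  have hmax : 0 ≤ max a b := le_max_of_le_left ha
  apply le_antisymm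
  · -- hard direction: ‖T‖ ≤ max a b
    refine ContinuousLinearMap.opNorm_le_bound T hmax fun x => ?_
    set p : H := (orthogonalProjection U x : H) -
      (orthogonalProjection V (orthogonalProjection U x : H) : H) with hp
    set q : H := (orthogonalProjection V (x - (orthogonalProjection U x : H)) : H) with hq
    have hdecomp : T x = p - q := by
      rw [hTapply, hp, hq, map_sub]
      push_cast
      abel
    have hpV : p ∈ Vᗮ := sub_starProjection_mem_orthogonal _
    have hqV : q ∈ V := (orthogonalProjection V _).2
    have hpq : ⟪p, q⟫ = 0 := by
      have := (Submodule.mem_orthogonal V p).mp hpV q hqV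
      simpa [real_inner_comm] using this
    have hnorm_sq : ‖T x‖ ^ 2 = ‖p‖ ^ 2 + ‖q‖ ^ 2 := by
      rw [hdecomp, norm_sub_sq_real, hpq]; ring
    have hxU : (orthogonalProjection U x : H) ∈ U := (orthogonalProjection U x).2
    have hbound_p : ‖p‖ ≤ a * ‖(orthogonalProjection U x : H)‖ := key1 U V _ hxU
    have hyUperp : x - (orthogonalProjection U x : H) ∈ Uᗮ :=
      sub_starProjection_mem_orthogonal x
    have hbound_q : ‖q‖ ≤ b * ‖x - (orthogonalProjection U x : H)‖ := key2 U V hV _ hyUperp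
    have hxdecomp : ‖x‖ ^ 2 = ‖(orthogonalProjection U x : H)‖ ^ 2 +
        ‖x - (orthogonalProjection U x : H)‖ ^ 2 := by
      have hinner : ⟪(orthogonalProjection U x : H), x - (orthogonalProjection U x : H)⟫ = 0 := by
        have := (Submodule.mem_orthogonal U (x - (orthogonalProjection U x : H))).mp hyUperp _ hxU
        simpa [real_inner_comm] using this
      have : x = (orthogonalProjection U x : H) + (x - (orthogonalProjection U x : H)) := by abel
      calc ‖x‖ ^ 2 = ‖(orthogonalProjection U x : H) + (x - (orthogonalProjection U x : H))‖ ^ 2 := by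
            rw [← this]
        _ = _ := by rw [norm_add_sq_real, hinner]; ring
    have haM : a ≤ max a b := le_max_left a b
    have hbM : b ≤ max a b := le_max_right a b
    have hsq : ‖T x‖ ^ 2 ≤ (max a b * ‖x‖) ^ 2 := by
      have h1 : ‖p‖ ^ 2 ≤ (max a b) ^ 2 * ‖(orthogonalProjection U x : H)‖ ^ 2 := by
        nlinarith [norm_nonneg p, norm_nonneg ((orthogonalProjection U x : H)),
          mul_le_mul_of_nonneg_right haM (norm_nonneg ((orthogonalProjection U x : H)))]
      have h2 : ‖q‖ ^ 2 ≤ (max a b) ^ 2 * ‖x - (orthogonalProjection U x : H)‖ ^ 2 := by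
        nlinarith [norm_nonneg q, norm_nonneg (x - (orthogonalProjection U x : H)),
          mul_le_mul_of_nonneg_right hbM (norm_nonneg (x - (orthogonalProjection U x : H)))]
      calc ‖T x‖ ^ 2 = ‖p‖ ^ 2 + ‖q‖ ^ 2 := hnorm_sq
        _ ≤ (max a b) ^ 2 * (‖(orthogonalProjection U x : H)‖ ^ 2 +
              ‖x - (orthogonalProjection U x : H)‖ ^ 2) := by nlinarith
        _ = (max a b * ‖x‖) ^ 2 := by rw [mul_pow, hxdecomp]
    calc ‖T x‖ = Real.sqrt (‖T x‖ ^ 2) := (Real.sqrt_sq (norm_nonneg _)).symm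
      _ ≤ Real.sqrt ((max a b * ‖x‖) ^ 2) := Real.sqrt_le_sqrt hsq
      _ = max a b * ‖x‖ := Real.sqrt_sq (by positivity)
  · -- easy direction: max a b ≤ ‖T‖
    have hgen : ∀ (W X : Submodule ℝ H) [HasOrthogonalProjection W] [HasOrthogonalProjection X],
        subspaceDelta W X ≤ ‖W.subtypeL.comp (orthogonalProjection W) -
          X.subtypeL.comp (orthogonalProjection X)‖ := by
      intro W X _ _
      apply Real.sSup_le _ (norm_nonneg _)
      rintro d ⟨u, hu, hu1, rfl⟩
      rw [infDist_eq_proj]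
      have hself : (orthogonalProjection W u : H) = u :=
        congrArg Subtype.val (orthogonalProjection_mem_subspace_eq_self (⟨u, hu⟩ : W))
      have : u - (orthogonalProjection X u : H) =
          (W.subtypeL.comp (orthogonalProjection W) -
            X.subtypeL.comp (orthogonalProjection X)) u := by
        simp [ContinuousLinearMap.sub_apply, hself]
      rw [this]
      calc ‖_‖ ≤ ‖W.subtypeL.comp (orthogonalProjection W) -
            X.subtypeL.comp (orthogonalProjection X)‖ * ‖u‖ :=
            ContinuousLinearMap.le_opNorm _ _
        _ = _ := by rw [hu1, mul_one]
    apply max_le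
    · exact hgen U V
    · calc b ≤ ‖V.subtypeL.comp (orthogonalProjection V) -
            U.subtypeL.comp (orthogonalProjection U)‖ := hgen V U
        _ = ‖T‖ := by rw [hT, norm_sub_rev]
end
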